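/- Let X be a T1 regular topological space and let f : 𝕊 → X be a continuous open surjection from the Sorgenfrey line onto X. If the weight of X is uncountable (X is not second countable), then there exists a closed subset of X that is homeomorphic to the Sorgenfrey line. -/

import Mathlib

open Set Filter Topology Function

/-- The Sorgenfrey line: the real line as a type synonym. -/
def SorgenfreyLine : Type := ℝ

notation "𝕊" => SorgenfreyLine

noncomputable instance : LinearOrder 𝕊 := inferInstanceAs (LinearOrder ℝ)
instance : RatCast 𝕊 := inferInstanceAs (RatCast ℝ)

/-- The topology on the Sorgenfrey line, generated by half-open intervals `[a, b)`, `a < b`. -/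
instance : TopologicalSpace 𝕊 :=
  TopologicalSpace.generateFrom {s : Set 𝕊 | ∃ a b : 𝕊, a < b ∧ s = Set.Ico a b}

set_option linter.unusedSectionVars false
set_option linter.unusedVariables false
set_option linter.unnecessarySimpa false
set_option linter.unusedTactic false
set_option maxHeartbeats 1000000

namespace SorgAux

def toS (x : ℝ) : 𝕊 := x
def toR (x : 𝕊) : ℝ := x

@[simp] lemma toR_toS (x : ℝ) : toR (toS x) = x := rfl
@[simp] lemma toS_toR (x : 𝕊) : toS (toR x) = x := rfl
@[simp] lemma toS_le_toS {x y : ℝ} : toS x ≤ toS y ↔ x ≤ y := Iff.rfl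
@[simp] lemma toS_lt_toS {x y : ℝ} : toS x < toS y ↔ x < y := Iff.rfl

lemma toS_bij : Function.Bijective toS := ⟨fun _ _ h => congrArg toR h, fun y => ⟨toR y, rfl⟩⟩

/-- basic interval in 𝕊 -/
def SIco (a b : ℝ) : Set 𝕊 := toS '' Set.Ico a b

@[simp] lemma mem_SIco {a b x : ℝ} : toS x ∈ SIco a b ↔ a ≤ x ∧ x < b := by
  constructor
  · rintro ⟨y, hy, h⟩; rwa [show y = x from congrArg toR h] at hy
  · intro h; exact ⟨x, h, rfl⟩

lemma mem_SIco' {a b : ℝ} {x : 𝕊} : x ∈ SIco a b ↔ a ≤ toR x ∧ toR x < b := by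
  rw [show x = toS (toR x) from rfl]; exact mem_SIco

lemma SIco_eq_Ico (a b : ℝ) : SIco a b = Set.Ico (toS a) (toS b) := by
  ext x; rw [mem_SIco', Set.mem_Ico]; exact Iff.rfl

lemma isOpen_SIco {a b : ℝ} (h : a < b) : IsOpen (SIco a b) := by
  rw [SIco_eq_Ico]
  exact TopologicalSpace.isOpen_generateFrom_of_mem ⟨toS a, toS b, h, rfl⟩

lemma isOpen_iff {U : Set 𝕊} :
    IsOpen U ↔ ∀ t : ℝ, toS t ∈ U → ∃ δ > 0, SIco t (t + δ) ⊆ U := by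
  constructor
  · intro h
    induction h with
    | basic s hs =>
      rintro t ht
      obtain ⟨a, b, hab, rfl⟩ := hs
      refine ⟨toR b - t, ?_, ?_⟩
      · have : toS t < b := ht.2
        exact sub_pos.mpr this
      · rintro x hx
        rw [mem_SIco'] at hx
        constructor
        · exact le_trans ht.1 hx.1
        · show toR x < toR b
          linarith [hx.2]
    | univ => intro t _; exact ⟨1, one_pos, fun x _ => trivial⟩
    | inter s₁ s₂ _ _ ih₁ ih₂ =>
      rintro t ⟨h₁, h₂⟩
      obtain ⟨δ₁, hδ₁, hs₁⟩ := ih₁ t h₁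
      obtain ⟨δ₂, hδ₂, hs₂⟩ := ih₂ t h₂
      refine ⟨min δ₁ δ₂, lt_min hδ₁ hδ₂, fun x hx => ?_⟩
      rw [mem_SIco'] at hx
      exact ⟨hs₁ (mem_SIco'.mpr ⟨hx.1, by have := hx.2; have := min_le_left δ₁ δ₂; linarith⟩),
             hs₂ (mem_SIco'.mpr ⟨hx.1, by have := hx.2; have := min_le_right δ₁ δ₂; linarith⟩)⟩
    | sUnion S _ ih =>
      rintro t ⟨s, hs, hts⟩
      obtain ⟨δ, hδ, h⟩ := ih s hs t hts
      exact ⟨δ, hδ, fun x hx => ⟨s, hs, h hx⟩⟩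
  · intro h
    have : U = ⋃ t : {t : ℝ // toS t ∈ U}, SIco t.1 (t.1 + Classical.choose (h t.1 t.2)) := by
      ext x
      constructor
      · intro hx
        refine Set.mem_iUnion.mpr ⟨⟨toR x, by simpa using hx⟩, ?_⟩
        rw [mem_SIco']
        have := (Classical.choose_spec (h (toR x) (by simpa using hx))).1
        constructor
        · exact le_refl _
        · linarith
      · intro hx
        obtain ⟨t, ht⟩ := Set.mem_iUnion.mp hx
        exact (Classical.choose_spec (h t.1 t.2)).2 ht
    rw [this]
    apply isOpen_iUnion
    intro t
    have := (Classical.choose_spec (h t.1 t.2)).1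
    exact isOpen_SIco (by linarith)


-- ### section 2

/-- "S-closed" sets of reals: closed under limits from the right. -/
def SClosed (B : Set ℝ) : Prop :=
  ∀ u : ℝ, (∀ δ > 0, (B ∩ Ico u (u + δ)).Nonempty) → u ∈ B

lemma SClosed.inter {A B : Set ℝ} (hA : SClosed A) (hB : SClosed B) : SClosed (A ∩ B) := by
  intro u hu
  constructor
  · exact hA u (fun δ hδ => ((hu δ hδ).imp (fun x hx => ⟨hx.1.1, hx.2⟩)))
  · exact hB u (fun δ hδ => ((hu δ hδ).imp (fun x hx => ⟨hx.1.2, hx.2⟩)))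

lemma SClosed.sInf_mem {B S : Set ℝ} (hB : SClosed B) (hSB : S ⊆ B) (hne : S.Nonempty)
    (hbdd : BddBelow S) : sInf S ∈ B := by
  apply hB
  intro δ hδ
  obtain ⟨s, hs, hslt⟩ := (csInf_lt_iff hbdd hne).mp (by linarith [csInf_le hbdd hne.some_mem] : sInf S < sInf S + δ)
  exact ⟨s, hSB hs, csInf_le hbdd hs, hslt⟩

/-- preimages of closed sets under continuous maps from 𝕊 are S-closed -/
lemma SClosed_of_isClosed {C : Set 𝕊} (h : IsClosed C) : SClosed (toS ⁻¹' C) := by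
  intro u hu
  by_contra hc
  obtain ⟨δ, hδ, hsub⟩ := isOpen_iff.mp h.isOpen_compl u hc
  obtain ⟨s, hsC, hs1, hs2⟩ := hu δ hδ
  exact hsub ⟨s, ⟨hs1, hs2⟩, rfl⟩ hsC

/-- If `S ⊆ ℝ` and for every `u ∈ S` the set `S ∩ Ioi u` is countable, then `S` is countable. -/
lemma countable_of_countable_right (S : Set ℝ) (h : ∀ u ∈ S, (S ∩ Ioi u).Countable) :
    S.Countable := by
  classical
  have pick : ∀ q : {q : ℚ // (S ∩ Iio ((q : ℚ) : ℝ)).Nonempty}, ∃ u : ℝ, u ∈ S ∩ Iio ((q : ℚ) : ℝ) :=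
    fun q => q.2
  choose u hu using pick
  have : S ⊆ {s | s ∈ S ∧ ∀ s' ∈ S, s ≤ s'} ∪ ⋃ q, (S ∩ Ioi (u q)) := by
    intro s hs
    by_cases hmin : ∀ s' ∈ S, s ≤ s'
    · exact Or.inl ⟨hs, hmin⟩
    · push_neg at hmin
      obtain ⟨s', hs', hlt⟩ := hmin
      obtain ⟨q, hq1, hq2⟩ := exists_rat_btwn hlt
      have hne : (S ∩ Iio (q : ℝ)).Nonempty := ⟨s', hs', hq1⟩
      right
      exact Set.mem_iUnion.mpr ⟨⟨q, hne⟩, hs, lt_trans (hu ⟨q, hne⟩).2 hq2⟩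
  apply Set.Countable.mono this
  apply Set.Countable.union
  · apply Set.Subsingleton.countable
    rintro a ⟨haS, ha⟩ b ⟨hbS, hb⟩
    exact le_antisymm (ha b hbS) (hb a haS)
  · exact Set.countable_iUnion (fun q => h (u q) (hu q).1)

/-- right-condensation points -/
def Rcond (Z : Set ℝ) : Set ℝ := {u | ∀ δ > 0, ¬ (Z ∩ Ioo u (u + δ)).Countable}

lemma SClosed_Rcond (Z : Set ℝ) : SClosed (Rcond Z) := by
  intro u hu
  intro δ hδ
  obtain ⟨v, hvR, hv1, hv2⟩ := hu (δ/2) (by linarith)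
  intro hc
  apply hvR (u + δ - v) (by linarith)
  apply hc.mono
  intro x hx
  exact ⟨hx.1, lt_of_le_of_lt hv1 hx.2.1, by linarith [hx.2.2]⟩

lemma countable_diff_Rcond (Z : Set ℝ) : (Z \ Rcond Z).Countable := by
  classical
  have : (Z \ Rcond Z) ⊆ ⋃ q : ℚ, {u | u ∈ Z ∧ u < (q : ℝ) ∧ (Z ∩ Ioo u (q : ℝ)).Countable} := by
    rintro u ⟨huZ, huR⟩
    simp only [Rcond, mem_setOf_eq, not_forall] at huR
    obtain ⟨δ, hδ, hcnt⟩ := huR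
    rw [not_not] at hcnt
    obtain ⟨q, hq1, hq2⟩ := exists_rat_btwn (by linarith : u < u + δ)
    refine Set.mem_iUnion.mpr ⟨q, huZ, hq1, hcnt.mono ?_⟩
    intro x hx
    exact ⟨hx.1, hx.2.1, lt_trans hx.2.2 hq2⟩
  apply Set.Countable.mono this
  apply Set.countable_iUnion
  intro q
  apply countable_of_countable_right
  rintro u ⟨_, hq, hcnt⟩
  have : {u_1 | u_1 ∈ Z ∧ u_1 < (q:ℝ) ∧ (Z ∩ Ioo u_1 (q:ℝ)).Countable} ∩ Ioi u ⊆ (Z ∩ Ioo u (q:ℝ)) := by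
    rintro x ⟨⟨hxZ, hxq, _⟩, hxu⟩
    exact ⟨hxZ, hxu, hxq⟩
  exact hcnt.mono this

lemma uncountable_inter_Rcond {Z : Set ℝ} (h : ¬ Z.Countable) : ¬ (Z ∩ Rcond Z).Countable := by
  intro hc
  apply h
  have : Z ⊆ (Z ∩ Rcond Z) ∪ (Z \ Rcond Z) := by
    intro z hz
    by_cases hr : z ∈ Rcond Z
    · exact Or.inl ⟨hz, hr⟩
    · exact Or.inr ⟨hz, hr⟩
  exact Set.Countable.mono this (hc.union (countable_diff_Rcond Z))

/-- Sorgenfrey-Lindelöf refinement lemma over ℝ: given a family of right-open intervals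
with positive lengths attached to points of `A`, countably many of them cover `A`. -/
lemma sorgenfrey_lindelof (A : Set ℝ) (δ : ℝ → ℝ) (hδ : ∀ t ∈ A, 0 < δ t) :
    ∃ A₀ ⊆ A, A₀.Countable ∧ ∀ t ∈ A, ∃ s ∈ A₀, t ∈ Ico s (s + δ s) := by
  classical
  obtain ⟨T, hTc, hTeq⟩ := TopologicalSpace.isOpen_iUnion_countable
    (fun t : A => Ioo t.1 (t.1 + δ t.1)) (fun t => isOpen_Ioo)
  set W : Set ℝ := ⋃ t : A, Ioo t.1 (t.1 + δ t.1) with hW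
  have hA2 : (A \ W).Countable := by
    have hpd : (A \ W).PairwiseDisjoint (fun t => Ioo t (t + δ t)) := by
      rintro a ⟨haA, haW⟩ b ⟨hbA, hbW⟩ hab
      rcases lt_or_gt_of_ne hab with h | h
      · apply Set.disjoint_left.mpr
        rintro x ⟨hx1, hx2⟩ ⟨hy1, hy2⟩
        -- b ∉ W, b > a ⇒ b ∉ Ioo a (a+δa) ⇒ b ≥ a + δ a
        have hbge : a + δ a ≤ b := by
          by_contra hc
          push_neg at hc
          exact hbW (Set.mem_iUnion.mpr ⟨⟨a, haA⟩, h, hc⟩)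
        linarith
      · apply Set.disjoint_left.mpr
        rintro x ⟨hx1, hx2⟩ ⟨hy1, hy2⟩
        have hage : b + δ b ≤ a := by
          by_contra hc
          push_neg at hc
          exact haW (Set.mem_iUnion.mpr ⟨⟨b, hbA⟩, h, hc⟩)
        linarith
    exact hpd.countable_of_isOpen (fun i _ => isOpen_Ioo)
      (fun i hi => ⟨i + δ i / 2, by constructor <;> [linarith [hδ i hi.1]; linarith [hδ i hi.1]]⟩)
  refine ⟨(fun t : A => t.1) '' T ∪ (A \ W), ?_, ?_, ?_⟩
  · rintro x (⟨t, _, rfl⟩ | hx)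
    · exact t.2
    · exact hx.1
  · exact (hTc.image _).union hA2
  · intro t ht
    by_cases htW : t ∈ W
    · rw [← hTeq] at htW
      obtain ⟨s, hs⟩ := Set.mem_iUnion.mp htW
      obtain ⟨hsT, hsm⟩ := Set.mem_iUnion.mp hs
      exact ⟨s.1, Or.inl ⟨s, hsT, rfl⟩, le_of_lt hsm.1, hsm.2⟩
    · exact ⟨t, Or.inr ⟨ht, htW⟩, le_refl t, by linarith [hδ t ht]⟩


-- section 3

lemma SIco_mono {a b b' : ℝ} (h : b ≤ b') : SIco a b ⊆ SIco a b' := by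
  rintro x ⟨y, hy, rfl⟩
  exact ⟨y, ⟨hy.1, lt_of_lt_of_le hy.2 h⟩, rfl⟩

lemma pigeonhole {α ι : Type*} [Countable ι] {A : Set α} (h : ¬ A.Countable) (g : α → ι) :
    ∃ i, ¬ {a | a ∈ A ∧ g a = i}.Countable := by
  by_contra hc
  push_neg at hc
  apply h
  have hsub : A ⊆ ⋃ i, {a | a ∈ A ∧ g a = i} :=
    fun a ha => Set.mem_iUnion.mpr ⟨g a, ha, rfl⟩
  exact (Set.countable_iUnion hc).mono hsub

variable {X : Type} [TopologicalSpace X]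

lemma SClosed_Ici (c : ℝ) : SClosed (Ici c) := by
  intro u hu
  by_contra hc
  simp only [mem_Ici, not_le] at hc
  obtain ⟨w, hw1, hw2, hw3⟩ := hu (c - u) (by linarith)
  rw [mem_Ici] at hw1
  linarith

lemma exists_subset_img (hf : Continuous f) {U : Set X} {s : ℝ} (hU : IsOpen U)
    (h : f (toS s) ∈ U) : ∃ δ > 0, f '' SIco s (s + δ) ⊆ U := by
  obtain ⟨δ, hδ, hsub⟩ := isOpen_iff.mp (hU.preimage hf) s h
  exact ⟨δ, hδ, by rintro y ⟨z, hz, rfl⟩; exact hsub hz⟩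

lemma mem_img_self (f : 𝕊 → X) {s δ : ℝ} (hδ : 0 < δ) : f (toS s) ∈ f '' SIco s (s + δ) :=
  ⟨toS s, mem_SIco.mpr ⟨le_refl _, by linarith⟩, rfl⟩

/-- the set of "bad" points -/
def Bad (f : 𝕊 → X) : Set X :=
  {x | ∃ U, IsOpen U ∧ x ∈ U ∧ ∀ q ε : ℚ, 0 < ε →
    x ∈ f '' SIco (q : ℝ) ((q : ℝ) + (ε : ℝ)) → ¬ (f '' SIco (q : ℝ) ((q : ℝ) + (ε : ℝ)) ⊆ U)}

lemma bad_uncountable {f : 𝕊 → X} (hf : Continuous f) (hopen : IsOpenMap f)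
    (hsurj : Surjective f) (hw : ¬ SecondCountableTopology X) : ¬ (Bad f).Countable := by
  classical
  intro hcnt
  apply hw
  set s : X → ℝ := fun x => toR (hsurj x).choose with hs_def
  have hs : ∀ x : X, f (toS (s x)) = x := fun x => (hsurj x).choose_spec
  set B1 : Set (Set X) :=
    (fun p : ℚ × ℚ => f '' SIco (p.1 : ℝ) ((p.1 : ℝ) + (p.2 : ℝ))) '' Set.univ with hB1
  set B2 : Set (Set X) :=
    (fun p : X × ℚ => f '' SIco (s p.1) (s p.1 + (p.2 : ℝ))) '' ((Bad f) ×ˢ (Set.univ : Set ℚ))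
    with hB2
  have himg_open : ∀ a b : ℝ, IsOpen (f '' SIco a b) := by
    intro a b
    rcases le_or_gt b a with h | h
    · have : SIco a b = ∅ := by
        ext z
        simp only [Set.mem_empty_iff_false, iff_false]
        rintro ⟨y, hy, rfl⟩
        exact absurd (lt_of_lt_of_le hy.2 h) (not_lt.mpr hy.1)
      rw [this]
      simpa using isOpen_empty
    · exact hopen _ (isOpen_SIco h)
  have hbasis : TopologicalSpace.IsTopologicalBasis (B1 ∪ B2) := by
    apply TopologicalSpace.isTopologicalBasis_of_isOpen_of_nhds
    · rintro u (⟨p, _, rfl⟩ | ⟨p, _, rfl⟩)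
      · exact himg_open _ _
      · exact himg_open _ _
    · intro a u hau hu
      by_cases hbad : a ∈ Bad f
      · have hsa : f (toS (s a)) = a := hs a
        obtain ⟨δ, hδ, hsub⟩ := exists_subset_img hf hu (by rw [hsa]; exact hau)
        obtain ⟨ε, hε0, hεδ⟩ := exists_rat_btwn hδ
        refine ⟨f '' SIco (s a) (s a + (ε : ℝ)), Or.inr ⟨⟨a, ε⟩, ⟨hbad, trivial⟩, rfl⟩, ?_, ?_⟩
        · have := mem_img_self f (s := s a) (δ := (ε : ℝ)) hε0
          rwa [hsa] at this
        · exact subset_trans (Set.image_mono (SIco_mono (by linarith))) hsub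
      · simp only [Bad, Set.mem_setOf_eq, not_exists] at hbad
        have := hbad u
        push_neg at this
        obtain ⟨q, ε, hε, hmem, hsub⟩ := this hu hau
        exact ⟨_, Or.inl ⟨⟨q, ε⟩, trivial, rfl⟩, hmem, hsub⟩
  refine hbasis.secondCountableTopology ?_
  refine (Set.Countable.union ?_ ?_)
  · exact Set.Countable.image (Set.countable_univ) _
  · exact Set.Countable.image (hcnt.prod Set.countable_univ) _

/-- the real fiber of `x` -/
def fiberR (f : 𝕊 → X) (x : X) : Set ℝ := {t : ℝ | f (toS t) = x}

lemma SClosed_fiberR [T1Space X] {f : 𝕊 → X} (hf : Continuous f) (x : X) :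
    SClosed (fiberR f x) := by
  have : fiberR f x = toS ⁻¹' (f ⁻¹' {x}) := rfl
  rw [this]
  exact SClosed_of_isClosed (IsClosed.preimage hf isClosed_singleton)

/-- Key gap lemma: for a bad point, within any right-interval around a fiber point that maps
into the witness open set, there is no other fiber point. -/
lemma bad_gap {f : 𝕊 → X} {x : X} {U : Set X}
    (hU : ∀ q ε : ℚ, 0 < ε → x ∈ f '' SIco (q : ℝ) ((q : ℝ) + (ε : ℝ)) →
      ¬ (f '' SIco (q : ℝ) ((q : ℝ) + (ε : ℝ)) ⊆ U))
    {t δ : ℝ} (hδsub : f '' SIco t (t + δ) ⊆ U)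
    {w : ℝ} (hw : w ∈ fiberR f x) (hw1 : t < w) (hw2 : w < t + δ) : False := by
  obtain ⟨q, hq1, hq2⟩ := exists_rat_btwn hw1
  obtain ⟨ε', hε'1, hε'2⟩ := exists_rat_btwn (show (q:ℝ) < t + δ from lt_trans hq2 hw2)
  -- want rational upper end in (w, t+δ]; take ε := ε' - q as rational with q+ε ∈ (w, t+δ)
  obtain ⟨ε, hε1, hε2⟩ := exists_rat_btwn (show max w (q:ℝ) < t + δ from max_lt hw2 (lt_trans hq2 hw2))
  -- ε is a rational real in (max w q, t+δ); use box [q, ε)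
  have hqε : (q : ℝ) < (ε : ℝ) := lt_of_le_of_lt (le_max_right _ _) hε1
  have hbox : f '' SIco (q:ℝ) ((q:ℝ) + ((ε - q : ℚ) : ℝ)) ⊆ U := by
    apply subset_trans _ hδsub
    apply Set.image_mono
    rintro z ⟨y, hy, rfl⟩
    refine ⟨y, ⟨le_trans (le_of_lt hq1) hy.1, ?_⟩, rfl⟩
    have : ((ε - q : ℚ) : ℝ) = (ε : ℝ) - (q : ℝ) := by push_cast; ring
    rw [this] at hy
    linarith [hy.2, hε2]
  have hmem : x ∈ f '' SIco (q:ℝ) ((q:ℝ) + ((ε - q : ℚ) : ℝ)) := by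
    refine ⟨toS w, ?_, hw⟩
    rw [mem_SIco]
    constructor
    · exact le_of_lt hq2
    · have : ((ε - q : ℚ) : ℝ) = (ε : ℝ) - (q : ℝ) := by push_cast; ring
      rw [this]
      have := lt_of_le_of_lt (le_max_left w (q:ℝ)) hε1
      linarith
  exact hU q (ε - q) (sub_pos.mpr (by exact_mod_cast hqε)) hmem hbox

/-- The master selection lemma: produces the window `[d, d+2ε)` and the uncountable set `P0`. -/
lemma exists_window [T1Space X] {f : 𝕊 → X} (hf : Continuous f) (hopen : IsOpenMap f)
    (hsurj : Surjective f) (hw : ¬ SecondCountableTopology X) :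
    ∃ (d ε : ℝ) (P0 : Set ℝ), 0 < ε ∧ ¬ P0.Countable ∧ P0 ⊆ Ico d (d + ε) ∧
      ∀ t ∈ P0, ∀ w : ℝ, f (toS w) = f (toS t) → w ∈ Ico d (d + 2*ε) → w = t := by
  classical
  have hbad := bad_uncountable hf hopen hsurj hw
  -- global fiber selection
  set s : X → ℝ := fun x => toR (hsurj x).choose with hs_def
  have hs : ∀ x : X, f (toS (s x)) = x := fun x => (hsurj x).choose_spec
  -- first pigeonhole: floor of s x
  obtain ⟨n, hn⟩ := pigeonhole hbad (fun x => ⌊s x⌋)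
  set c : ℝ := (n : ℝ) with hc_def
  -- the minimal fiber point above c
  set m : X → ℝ := fun x => sInf (fiberR f x ∩ Ici c) with hm_def
  have hm_mem : ∀ x, x ∈ Bad f → ⌊s x⌋ = n → m x ∈ fiberR f x ∩ Ici c := by
    intro x hxB hxn
    apply SClosed.sInf_mem ((SClosed_fiberR hf x).inter (SClosed_Ici c))
      (subset_refl _) ⟨s x, hs x, by rw [mem_Ici, hc_def, ← hxn]; exact Int.floor_le (s x)⟩
      ⟨c, fun y hy => hy.2⟩
  -- the gap δ at m x
  have hgap : ∀ x, x ∈ Bad f → ⌊s x⌋ = n →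
      ∃ δ > 0, ∀ w ∈ fiberR f x, w ∈ Ico c (m x + δ) → w = m x := by
    intro x hxB hxn
    obtain ⟨U, hUopen, hxU, hUbad⟩ := id hxB
    have hmx := hm_mem x hxB hxn
    have hfm : f (toS (m x)) = x := hmx.1
    obtain ⟨δ, hδ, hsub⟩ := exists_subset_img hf hUopen (by rw [hfm]; exact hxU)
    refine ⟨δ, hδ, ?_⟩
    rintro w hwfib ⟨hw1, hw2⟩
    rcases lt_trichotomy w (m x) with h | h | h
    · exfalso
      have : m x ≤ w := csInf_le ⟨c, fun y hy => hy.2⟩ ⟨hwfib, hw1⟩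
      linarith
    · exact h
    · exact absurd (bad_gap hUbad hsub hwfib h hw2) not_false
  -- choose δ
  set dl : X → ℝ := fun x => if h : ∃ δ > 0, ∀ w ∈ fiberR f x, w ∈ Ico c (m x + δ) → w = m x
    then h.choose else 1 with hdl_def
  have hdl : ∀ x, x ∈ Bad f → ⌊s x⌋ = n →
      0 < dl x ∧ ∀ w ∈ fiberR f x, w ∈ Ico c (m x + dl x) → w = m x := by
    intro x hxB hxn
    have h := hgap x hxB hxn
    rw [hdl_def]
    simp only [dif_pos h]
    exact ⟨h.choose_spec.1, h.choose_spec.2⟩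
  -- second pigeonhole: j with 2/(j+1) < dl x
  set gj : X → ℕ := fun x => if h : ∃ j : ℕ, 2/((j:ℝ)+1) < dl x then h.choose else 0 with hgj_def
  have harch : ∀ x, 0 < dl x → ∃ j : ℕ, 2/((j:ℝ)+1) < dl x := by
    intro x hdlx
    obtain ⟨N, hN⟩ := exists_nat_gt (2 / dl x)
    refine ⟨N, ?_⟩
    rw [div_lt_iff₀ (by positivity)]
    rw [div_lt_iff₀ hdlx] at hN
    nlinarith
  obtain ⟨j, hj⟩ := pigeonhole hn gj
  set ε : ℝ := 1/((j:ℝ)+1) with hε_def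
  have hε : 0 < ε := by positivity
  have hA2dl : ∀ x, x ∈ Bad f → ⌊s x⌋ = n → gj x = j → 2 * ε < dl x := by
    intro x hxB hxn hxj
    have h := harch x (hdl x hxB hxn).1
    rw [hgj_def] at hxj
    simp only [dif_pos h] at hxj
    have := h.choose_spec
    rw [hxj] at this
    rw [hε_def]
    calc 2 * (1/((j:ℝ)+1)) = 2/((j:ℝ)+1) := by ring
    _ < dl x := this
  -- third pigeonhole: position of m x
  obtain ⟨k, hk⟩ := pigeonhole hj (fun x => (⌊(m x - c)/ε⌋).toNat)
  set d : ℝ := c + (k:ℝ)*ε with hd_def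
  have hmx_mem : ∀ x, x ∈ Bad f → ⌊s x⌋ = n → (⌊(m x - c)/ε⌋).toNat = k →
      m x ∈ Ico d (d + ε) := by
    intro x hxB hxn hfl
    have hmem := hm_mem x hxB hxn
    have hge : c ≤ m x := hmem.2
    have h0 : (0:ℤ) ≤ ⌊(m x - c)/ε⌋ := Int.floor_nonneg.mpr (by
      apply div_nonneg _ (le_of_lt hε); linarith)
    have hkk : (⌊(m x - c)/ε⌋ : ℤ) = (k : ℤ) := by
      rw [← hfl]
      exact (Int.toNat_of_nonneg h0).symm
    have h1 : ((k:ℤ):ℝ) ≤ (m x - c)/ε := by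
      rw [← hkk]; exact Int.floor_le _
    have h2 : (m x - c)/ε < ((k:ℤ):ℝ) + 1 := by
      rw [← hkk]; exact Int.lt_floor_add_one _
    rw [le_div_iff₀ hε] at h1
    rw [div_lt_iff₀ hε] at h2
    constructor
    · rw [hd_def]; push_cast at h1 ⊢; linarith
    · rw [hd_def]; push_cast at h2 ⊢; linarith
  set A3 : Set X := {a | a ∈ {a | a ∈ {a | a ∈ Bad f ∧ ⌊s a⌋ = n} ∧ gj a = j} ∧
      (⌊(m a - c)/ε⌋).toNat = k} with hA3_def
  have hA3 : ∀ x ∈ A3, x ∈ Bad f ∧ ⌊s x⌋ = n ∧ gj x = j ∧ (⌊(m x - c)/ε⌋).toNat = k := by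
    rintro x ⟨⟨⟨h1, h2⟩, h3⟩, h4⟩
    exact ⟨h1, h2, h3, h4⟩
  refine ⟨d, ε, m '' A3, hε, ?_, ?_, ?_⟩
  · -- uncountability
    intro hcnt
    apply hk
    have hsub : A3 ⊆ (fun t => f (toS t)) '' (m '' A3) := by
      intro x hx
      obtain ⟨h1, h2, _, _⟩ := hA3 x hx
      exact ⟨m x, ⟨x, hx, rfl⟩, (hm_mem x h1 h2).1⟩
    exact ((hcnt.image _).mono hsub)
  · rintro t ⟨x, hx, rfl⟩
    obtain ⟨h1, h2, _, h4⟩ := hA3 x hx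
    exact hmx_mem x h1 h2 h4
  · rintro t ⟨x, hx, rfl⟩ w hfw hwin
    obtain ⟨h1, h2, h3, h4⟩ := hA3 x hx
    have hfx : f (toS (m x)) = x := (hm_mem x h1 h2).1
    have hwfib : w ∈ fiberR f x := by
      show f (toS w) = x
      rw [hfw, hfx]
    apply (hdl x h1 h2).2 w hwfib
    have hdlx := hA2dl x h1 h2 h3
    have hmge : d ≤ m x := (hmx_mem x h1 h2 h4).1
    have hcd : c ≤ d := by
      rw [hd_def]
      have : (0:ℝ) ≤ (k:ℝ)*ε := by positivity
      linarith
    constructor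
    · exact le_trans hcd hwin.1
    · have := hwin.2
      linarith

-- ## Section 5

section Five
variable {X : Type} [TopologicalSpace X] {f : 𝕊 → X} {d ε : ℝ} {P0 : Set ℝ}

/-- the S-closure of P0 -/
def P2 (P0 : Set ℝ) : Set ℝ := {u : ℝ | ∀ δ > 0, (P0 ∩ Ico u (u + δ)).Nonempty}

lemma subset_P2 : P0 ⊆ P2 P0 := by
  intro t ht δ hδ
  exact ⟨t, ht, le_refl _, by linarith⟩

lemma SClosed_P2 : SClosed (P2 P0) := by
  intro u hu δ hδ
  obtain ⟨t, htP2, ht1, ht2⟩ := hu (δ/2) (by linarith)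
  obtain ⟨p, hp, hp1, hp2⟩ := htP2 (δ/2) (by linarith)
  exact ⟨p, hp, le_trans ht1 hp1, by linarith⟩

lemma P2_subset (hε : 0 < ε) (hP0 : P0 ⊆ Ico d (d + ε)) : P2 P0 ⊆ Ico d (d + ε) := by
  intro u hu
  constructor
  · by_contra hc
    push_neg at hc
    obtain ⟨t, ht, ht1, ht2⟩ := hu (d - u) (by linarith)
    linarith [(hP0 ht).1]
  · obtain ⟨t, ht, ht1, ht2⟩ := hu 1 one_pos
    linarith [(hP0 ht).2]

variable (hf : Continuous f) (hopen : IsOpenMap f) (hε : 0 < ε)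
  (hP0sub : P0 ⊆ Ico d (d + ε))
  (hP0win : ∀ t ∈ P0, ∀ w : ℝ, f (toS w) = f (toS t) → w ∈ Ico d (d + 2*ε) → w = t)

include hf hopen hε hP0sub hP0win in
/-- window property extends to the S-closure -/
lemma P2_win : ∀ u ∈ P2 P0, ∀ w : ℝ, f (toS w) = f (toS u) → w ∈ Ico d (d + 2*ε) → w = u := by
  intro u hu w hfw hwin
  have huIco := P2_subset hε hP0sub hu
  -- main approximation step
  have key : ∀ γ : ℝ, 0 < γ → w + γ ≤ d + 2*ε → ∀ γ'' > 0, ∃ t ∈ P0,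
      u ≤ t ∧ t < u + γ'' ∧ w ≤ t ∧ t < w + γ := by
    intro γ hγ hγwin γ'' hγ''
    have hO : IsOpen (f '' SIco w (w + γ)) := hopen _ (isOpen_SIco (by linarith))
    have hzO : f (toS u) ∈ f '' SIco w (w + γ) := by
      rw [← hfw]
      exact mem_img_self f hγ
    obtain ⟨γ', hγ', hsub⟩ := isOpen_iff.mp (hO.preimage hf) u hzO
    obtain ⟨t, htP0, ht1, ht2⟩ := hu (min γ' γ'') (lt_min hγ' hγ'')
    have htO : f (toS t) ∈ f '' SIco w (w + γ) := by
      apply hsub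
      exact ⟨t, ⟨ht1, lt_of_lt_of_le ht2 (add_le_add_right (min_le_left _ _) u)⟩, rfl⟩
    obtain ⟨y, hy, hfy⟩ := htO
    obtain ⟨w', hw', rfl⟩ := hy
    have hw'win : w' ∈ Ico d (d + 2*ε) := ⟨le_trans hwin.1 hw'.1, by linarith [hw'.2]⟩
    have heq := hP0win t htP0 w' hfy hw'win
    exact ⟨t, htP0, ht1, lt_of_lt_of_le ht2 (add_le_add_right (min_le_right _ _) u),
      heq ▸ hw'.1, heq ▸ hw'.2⟩
  rcases lt_trichotomy w u with h | h | h
  · -- w < u : contradiction via small γ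
    exfalso
    have hwd : w + min (u - w) (d + 2*ε - w) ≤ d + 2*ε := by
      have := min_le_right (u - w) (d + 2*ε - w); linarith
    obtain ⟨t, _, htu, _, _, htw⟩ := key (min (u - w) (d + 2*ε - w))
      (lt_min (by linarith) (by linarith [hwin.2])) hwd 1 one_pos
    have := min_le_left (u - w) (d + 2*ε - w)
    linarith
  · exact h.symm ▸ rfl
  · -- u < w : contradiction
    exfalso
    obtain ⟨t, _, _, htu, htw, _⟩ := key (d + 2*ε - w) (by linarith [hwin.2]) (by linarith)
      (w - u) (by linarith)
    linarith

include hf hopen hε hP0sub hP0win in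
lemma P2_inj : InjOn (fun t => f (toS t)) (P2 P0) := by
  intro a ha b hb hab
  have hbw := P2_subset hε hP0sub hb
  have := P2_win hf hopen hε hP0sub hP0win a ha b hab.symm ⟨hbw.1, by linarith [hbw.2]⟩
  exact this.symm

include hf hopen hε hP0sub hP0win in
/-- the trace identity -/
lemma trace_eq {B : Set ℝ} (hB : B ⊆ P2 P0) {t γ : ℝ} (ht : t ∈ P2 P0) (hγ : 0 < γ)
    (hγ2 : t + γ ≤ d + 2*ε) :
    (f '' SIco t (t + γ)) ∩ ((fun t => f (toS t)) '' B) =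
      (fun t => f (toS t)) '' (B ∩ Ico t (t + γ)) := by
  have htIco := P2_subset hε hP0sub ht
  apply Set.eq_of_subset_of_subset
  · rintro y ⟨⟨z, hz, rfl⟩, ⟨b, hbB, hfb⟩⟩
    obtain ⟨w, hw, rfl⟩ := hz
    have hwin : w ∈ Ico d (d + 2*ε) := ⟨le_trans htIco.1 hw.1, by linarith [hw.2]⟩
    have heq := P2_win hf hopen hε hP0sub hP0win b (hB hbB) w hfb.symm hwin
    exact ⟨b, ⟨hbB, heq ▸ hw.1, heq ▸ hw.2⟩, hfb⟩
  · rintro y ⟨b, ⟨hbB, hbt⟩, rfl⟩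
    exact ⟨⟨toS b, ⟨b, hbt, rfl⟩, rfl⟩, ⟨b, hbB, rfl⟩⟩

include hf hopen hε hP0sub hP0win in
/-- closure of the image of an S-closed subset of P2, intersected with the window image -/
lemma closure_inter_V {B : Set ℝ} (hB : B ⊆ P2 P0) (hBS : SClosed B) :
    closure ((fun t => f (toS t)) '' B) ∩ (f '' SIco d (d + 2*ε)) =
      (fun t => f (toS t)) '' B := by
  apply Set.eq_of_subset_of_subset
  · rintro y ⟨hycl, ⟨z, hz, rfl⟩⟩
    obtain ⟨u, hu, rfl⟩ := hz
    -- show u ∈ B using SClosed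
    have huB : u ∈ B := by
      apply hBS
      intro δ hδ
      set δ' := min δ (d + 2*ε - u) with hδ'_def
      have hδ' : 0 < δ' := lt_min hδ (by linarith [hu.2])
      have hO : IsOpen (f '' SIco u (u + δ')) := hopen _ (isOpen_SIco (by linarith))
      have hne := (mem_closure_iff.mp hycl) _ hO (mem_img_self f hδ')
      obtain ⟨y', ⟨⟨z', hz', rfl⟩, ⟨b, hbB, hfb⟩⟩⟩ := hne
      obtain ⟨w, hw, rfl⟩ := hz'
      have hwin : w ∈ Ico d (d + 2*ε) := ⟨le_trans hu.1 hw.1, by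
        have := hw.2
        have := min_le_right δ (d + 2*ε - u)
        have h3 : δ' = min δ (d + 2*ε - u) := hδ'_def
        linarith⟩
      have heq := P2_win hf hopen hε hP0sub hP0win b (hB hbB) w hfb.symm hwin
      refine ⟨b, hbB, heq ▸ hw.1, ?_⟩
      have := heq ▸ hw.2
      have h2 := min_le_left δ (d + 2*ε - u)
      simp only [hδ'_def] at this
      linarith
    exact ⟨u, huB, rfl⟩
  · intro y hy
    refine ⟨subset_closure hy, ?_⟩
    obtain ⟨b, hbB, rfl⟩ := hy
    have hbw := P2_subset hε hP0sub (hB hbB)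
    exact ⟨toS b, ⟨b, ⟨hbw.1, by linarith [hbw.2]⟩, rfl⟩, rfl⟩


end Five

/-- Every open subset of X is a countable union of closed sets. -/
lemma open_isFsigma {X : Type} [TopologicalSpace X] [RegularSpace X] {f : 𝕊 → X}
    (hf : Continuous f) (hsurj : Surjective f) {G : Set X} (hG : IsOpen G) :
    ∃ K : Set (Set X), K.Countable ∧ (∀ k ∈ K, IsClosed k ∧ k ⊆ G) ∧ ⋃₀ K = G := by
  classical
  have hchoice : ∀ t : ℝ, ∃ (N : Set X) (δ : ℝ), f (toS t) ∈ G →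
      (IsClosed N ∧ N ⊆ G ∧ 0 < δ ∧ SIco t (t + δ) ⊆ f ⁻¹' (interior N)) := by
    intro t
    by_cases h : f (toS t) ∈ G
    · obtain ⟨N, hN1, hN2, hN3⟩ := exists_mem_nhds_isClosed_subset (hG.mem_nhds h)
      have hNint : f (toS t) ∈ interior N := mem_interior_iff_mem_nhds.mpr hN1
      obtain ⟨δ, hδ, hsub⟩ := isOpen_iff.mp (isOpen_interior.preimage hf) t hNint
      exact ⟨N, δ, fun _ => ⟨hN2, hN3, hδ, hsub⟩⟩
    · exact ⟨∅, 1, fun hc => absurd hc h⟩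
  choose N δ hNδ using hchoice
  set A : Set ℝ := {t | f (toS t) ∈ G} with hA_def
  have hδpos : ∀ t ∈ A, 0 < δ t := fun t ht => (hNδ t ht).2.2.1
  obtain ⟨A₀, hA₀sub, hA₀cnt, hA₀cov⟩ := sorgenfrey_lindelof A δ hδpos
  refine ⟨(fun s => N s) '' A₀, hA₀cnt.image _, ?_, ?_⟩
  · rintro k ⟨s, hs, rfl⟩
    exact ⟨(hNδ s (hA₀sub hs)).1, (hNδ s (hA₀sub hs)).2.1⟩
  · apply Set.eq_of_subset_of_subset
    · rintro y ⟨k, ⟨s, hs, rfl⟩, hyk⟩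
      exact (hNδ s (hA₀sub hs)).2.1 hyk
    · intro y hy
      obtain ⟨ty, hty⟩ := hsurj y
      have htyA : toR ty ∈ A := by
        show f (toS (toR ty)) ∈ G
        exact hty ▸ hy
      obtain ⟨s, hsA₀, hmem⟩ := hA₀cov (toR ty) htyA
      have := (hNδ s (hA₀sub hsA₀)).2.2.2 ⟨toR ty, hmem, rfl⟩
      have hyN : y ∈ interior (N s) := by
        rw [← hty]
        exact this
      exact ⟨N s, ⟨s, hsA₀, rfl⟩, interior_subset hyN⟩

/-- The final closed uncountable S-closed crowded set `Bfin` with closed image. -/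
lemma exists_Bfin {X : Type} [TopologicalSpace X] [T1Space X] [RegularSpace X] {f : 𝕊 → X}
    (hf : Continuous f) (hopen : IsOpenMap f) (hsurj : Surjective f)
    (hw : ¬ SecondCountableTopology X) :
    ∃ (d ε : ℝ) (B : Set ℝ), 0 < ε ∧ B ⊆ Ico d (d + ε) ∧ SClosed B ∧ B.Nonempty ∧
      (∀ b ∈ B, ∀ δ > 0, (B ∩ Ioo b (b + δ)).Nonempty) ∧
      (∀ u ∈ B, ∀ w : ℝ, f (toS w) = f (toS u) → w ∈ Ico d (d + 2*ε) → w = u) ∧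
      IsClosed ((fun t => f (toS t)) '' B) := by
  classical
  obtain ⟨d, ε, P0, hε, hP0unc, hP0sub, hP0win⟩ := exists_window hf hopen hsurj hw
  have hP2sub := P2_subset (d := d) (ε := ε) (P0 := P0) hε hP0sub
  have hP2win := P2_win hf hopen hε hP0sub hP0win
  have hP2unc : ¬ (P2 P0).Countable := fun hc => hP0unc (hc.mono subset_P2)
  -- the witness open set V and the exceptional closed set E
  set FF : ℝ → X := fun t => f (toS t) with hFF_def
  set V : Set X := f '' SIco d (d + 2*ε) with hV_def
  have hVopen : IsOpen V := hopen _ (isOpen_SIco (by linarith))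
  have hL13 := closure_inter_V hf hopen hε hP0sub hP0win (subset_refl (P2 P0)) SClosed_P2
  set E : Set X := closure (FF '' P2 P0) \ V with hE_def
  have hEclosed : IsClosed E := IsClosed.inter isClosed_closure (isClosed_compl_iff.mpr hVopen)
  have hGopen : IsOpen Eᶜ := hEclosed.isOpen_compl
  have hP2G : FF '' P2 P0 ⊆ Eᶜ := by
    intro y hy
    simp only [hE_def, Set.mem_compl_iff, Set.mem_diff, not_and, not_not]
    intro _
    have : y ∈ closure (FF '' P2 P0) ∩ V := by
      rw [hL13]; exact hy
    exact this.2
  obtain ⟨K, hKcnt, hKprop, hKcov⟩ := open_isFsigma hf hsurj hGopen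
  -- pigeonhole over K
  have hpigeon : ∃ k ∈ K, ¬ (FF '' P2 P0 ∩ k).Countable := by
    by_contra hc
    push_neg at hc
    have : FF '' P2 P0 ⊆ ⋃ k : K, (FF '' P2 P0 ∩ k) := by
      intro y hy
      have : y ∈ ⋃₀ K := hKcov ▸ hP2G hy
      obtain ⟨k, hk, hyk⟩ := this
      exact Set.mem_iUnion.mpr ⟨⟨k, hk⟩, hy, hyk⟩
    have hcnt : (⋃ k : K, (FF '' P2 P0 ∩ k)).Countable := by
      have := hKcnt.to_subtype
      exact Set.countable_iUnion (fun k => hc k k.2)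
    have hP2imgcnt := hcnt.mono this
    exact hP2unc (Set.countable_of_injective_of_countable_image
      (P2_inj hf hopen hε hP0sub hP0win) hP2imgcnt)
  obtain ⟨Dn, hDnK, hDnunc⟩ := hpigeon
  have hDnclosed : IsClosed Dn := (hKprop Dn hDnK).1
  have hDnG : Dn ⊆ Eᶜ := (hKprop Dn hDnK).2
  -- Bn
  set Bn : Set ℝ := P2 P0 ∩ {t | FF t ∈ Dn} with hBn_def
  have hBnP2 : Bn ⊆ P2 P0 := fun t ht => ht.1
  have himgBn : FF '' Bn = FF '' P2 P0 ∩ Dn := by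
    apply Set.eq_of_subset_of_subset
    · rintro y ⟨t, ⟨ht1, ht2⟩, rfl⟩
      exact ⟨⟨t, ht1, rfl⟩, ht2⟩
    · rintro y ⟨⟨t, ht, rfl⟩, hyD⟩
      exact ⟨t, ⟨ht, hyD⟩, rfl⟩
  have hBnimg_closed : IsClosed (FF '' Bn) := by
    rw [himgBn]
    have : FF '' P2 P0 ∩ Dn = closure (FF '' P2 P0) ∩ Dn := by
      apply Set.eq_of_subset_of_subset
      · exact Set.inter_subset_inter_left _ subset_closure
      · rintro y ⟨hycl, hyD⟩
        refine ⟨?_, hyD⟩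
        have hyG : y ∈ Eᶜ := hDnG hyD
        simp only [hE_def, Set.mem_compl_iff, Set.mem_diff, not_and, not_not] at hyG
        have : y ∈ closure (FF '' P2 P0) ∩ V := ⟨hycl, hyG hycl⟩
        rw [hL13] at this
        exact this
    rw [this]
    exact IsClosed.inter isClosed_closure hDnclosed
  have hBnunc : ¬ Bn.Countable := by
    intro hc
    apply hDnunc
    rw [← himgBn]
    exact hc.image _
  have hBnS : SClosed Bn := by
    intro u hu
    constructor
    · apply SClosed_P2
      intro δ hδ
      exact ((hu δ hδ).imp (fun t ht => ⟨ht.1.1, ht.2⟩))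
    · -- FF u ∈ Dn via closure
      have : FF u ∈ closure (FF '' Bn) := by
        rw [mem_closure_iff]
        intro o ho hyo
        obtain ⟨δ, hδ, hsub⟩ := isOpen_iff.mp (ho.preimage hf) u hyo
        obtain ⟨t, htBn, ht1, ht2⟩ := hu δ hδ
        exact ⟨FF t, hsub ⟨t, ⟨ht1, ht2⟩, rfl⟩, ⟨t, htBn, rfl⟩⟩
      rw [hBnimg_closed.closure_eq] at this
      rw [himgBn] at this
      exact this.2
  -- Bfin
  set Bfin : Set ℝ := Bn ∩ Rcond Bn with hBfin_def
  have hBfinS : SClosed Bfin := hBnS.inter (SClosed_Rcond Bn)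
  have hBfinunc : ¬ Bfin.Countable := uncountable_inter_Rcond hBnunc
  have hBfinne : Bfin.Nonempty := by
    rcases Set.eq_empty_or_nonempty Bfin with h | h
    · exact absurd (h ▸ Set.countable_empty) hBfinunc
    · exact h
  have hBfincrowd : ∀ b ∈ Bfin, ∀ δ > 0, (Bfin ∩ Ioo b (b + δ)).Nonempty := by
    intro b hb δ hδ
    by_contra hc
    rw [Set.not_nonempty_iff_eq_empty] at hc
    apply hb.2 δ hδ
    have hsub : Bn ∩ Ioo b (b + δ) ⊆ Bn \ Rcond Bn := by
      rintro t ⟨ht1, ht2⟩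
      refine ⟨ht1, fun hR => ?_⟩
      have : t ∈ Bfin ∩ Ioo b (b + δ) := ⟨⟨ht1, hR⟩, ht2⟩
      rw [hc] at this
      exact this
    exact (countable_diff_Rcond Bn).mono hsub
  have hBfinwin : ∀ u ∈ Bfin, ∀ w : ℝ, f (toS w) = f (toS u) → w ∈ Ico d (d + 2*ε) → w = u :=
    fun u hu w h1 h2 => hP2win u (hBnP2 hu.1) w h1 h2
  have hBfinsub : Bfin ⊆ Ico d (d + ε) := fun t ht => hP2sub (hBnP2 ht.1)
  -- closedness of the image of Bfin
  have hkey : FF '' Bfin = FF '' Bn ∩ closure (FF '' Bfin) := by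
    apply Set.eq_of_subset_of_subset
    · intro y hy
      exact ⟨Set.image_mono (f := FF) (fun t ht => ht.1) hy, subset_closure hy⟩
    · rintro y ⟨⟨t, htBn, rfl⟩, hycl⟩
      refine ⟨t, ⟨htBn, ?_⟩, rfl⟩
      have htBfin : t ∈ Bfin := by
        apply hBfinS
        intro δ hδ
        set δ' := min δ ε with hδ'_def
        have hδ' : 0 < δ' := lt_min hδ hε
        have hO : IsOpen (f '' SIco t (t + δ')) := hopen _ (isOpen_SIco (by linarith))
        have hne := (mem_closure_iff.mp hycl) _ hO (mem_img_self f hδ')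
        obtain ⟨y', ⟨⟨z', hz', rfl⟩, ⟨b, hbB, hfb⟩⟩⟩ := hne
        obtain ⟨w, hw, rfl⟩ := hz'
        have htIco := hP2sub (hBnP2 htBn)
        have hwin : w ∈ Ico d (d + 2*ε) := ⟨le_trans htIco.1 hw.1, by
          have h1 := hw.2
          have h2 := min_le_right δ ε
          simp only [hδ'_def] at h1
          have h3 := htIco.2
          linarith⟩
        have heq := hP2win b (hBnP2 hbB.1) w hfb.symm hwin
        refine ⟨b, hbB, heq ▸ hw.1, ?_⟩
        have h1 := heq ▸ hw.2
        have h2 := min_le_left δ ε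
        simp only [hδ'_def] at h1
        linarith
      exact htBfin.2
  refine ⟨d, ε, Bfin, hε, hBfinsub, hBfinS, hBfinne, hBfincrowd, hBfinwin, ?_⟩
  have : FF '' Bfin = FF '' Bn ∩ closure (FF '' Bfin) := hkey
  rw [this]
  exact IsClosed.inter hBnimg_closed isClosed_closure


/-- CORE: a parametrization of an S-closed crowded bounded-below set by `[0,1)`. -/
lemma core_param {B : Set ℝ} (hBS : SClosed B) (hBne : B.Nonempty) (hBbdd : BddBelow B)
    (hBcrowd : ∀ b ∈ B, ∀ δ > 0, (B ∩ Ioo b (b + δ)).Nonempty) :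
    ∃ g : ℝ → ℝ,
      (∀ x ∈ Ico (0:ℝ) 1, g x ∈ B) ∧
      (∀ x ∈ Ico (0:ℝ) 1, ∀ y ∈ Ico (0:ℝ) 1, x < y → g x < g y) ∧
      (∀ x ∈ Ico (0:ℝ) 1, ∀ γ > 0, ∃ δ > 0, ∀ y ∈ Ico (0:ℝ) 1, x ≤ y → y < x + δ →
        g x ≤ g y ∧ g y < g x + γ) ∧
      (∀ b ∈ B, ∃ x ∈ Ico (0:ℝ) 1, g x = b) := by
  classical
  set b₀ : ℝ := sInf B with hb₀_def
  have hb₀B : b₀ ∈ B := hBS.sInf_mem (subset_refl B) hBne hBbdd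
  have hb₀le : ∀ b ∈ B, b₀ ≤ b := fun b hb => csInf_le hBbdd hb
  -- the countable dense pick set D
  set pick : ℚ → ℚ → ℝ := fun q q' =>
    if h : (B ∩ Ioo (q:ℝ) (q':ℝ)).Nonempty then h.some else b₀ with hpick_def
  set D : Set ℝ := {z | z ≠ b₀ ∧ z ∈ B ∧ ∃ q q' : ℚ, z = pick q q'} with hD_def
  have hDB : D ⊆ B := fun z hz => hz.2.1
  have hDcnt : D.Countable := by
    have : D ⊆ (fun p : ℚ × ℚ => pick p.1 p.2) '' Set.univ := by
      rintro z ⟨_, _, q, q', rfl⟩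
      exact ⟨(q, q'), trivial, rfl⟩
    exact (Set.Countable.image Set.countable_univ _).mono this
  have hD2 : ∀ b ∈ B, ∀ γ > 0, ∃ z ∈ D, b < z ∧ z < b + γ := by
    intro b hb γ hγ
    obtain ⟨b', hb'B, hb'1, hb'2⟩ := hBcrowd b hb γ hγ
    obtain ⟨b'', hb''B, hb''1, hb''2⟩ := hBcrowd b' hb'B (b + γ - b') (by linarith)
    have hb''3 : b'' < b + γ := by linarith
    obtain ⟨q, hq1, hq2⟩ := exists_rat_btwn hb''1
    obtain ⟨q', hq'1, hq'2⟩ := exists_rat_btwn hb''3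
    have hne : (B ∩ Ioo (q:ℝ) (q':ℝ)).Nonempty := ⟨b'', hb''B, hq2, hq'1⟩
    refine ⟨pick q q', ?_, ?_, ?_⟩
    · refine ⟨?_, ?_, q, q', rfl⟩
      · have : pick q q' ∈ B ∩ Ioo (q:ℝ) (q':ℝ) := by
          rw [hpick_def]; simp only [dif_pos hne]; exact hne.some_mem
        have hgt : b' < pick q q' := lt_trans hq1 this.2.1
        have : b₀ ≤ b' := hb₀le b' hb'B
        intro hc
        rw [hc] at hgt
        linarith
      · have : pick q q' ∈ B ∩ Ioo (q:ℝ) (q':ℝ) := by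
          rw [hpick_def]; simp only [dif_pos hne]; exact hne.some_mem
        exact this.1
    · have : pick q q' ∈ B ∩ Ioo (q:ℝ) (q':ℝ) := by
        rw [hpick_def]; simp only [dif_pos hne]; exact hne.some_mem
      have := this.2.1
      linarith
    · have : pick q q' ∈ B ∩ Ioo (q:ℝ) (q':ℝ) := by
        rw [hpick_def]; simp only [dif_pos hne]; exact hne.some_mem
      have := this.2.2
      linarith
  -- instances on the subtype D
  have hDne : D.Nonempty := by
    obtain ⟨z, hz, _, _⟩ := hD2 b₀ hb₀B 1 one_pos
    exact ⟨z, hz⟩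
  have hb₀ltD : ∀ z ∈ D, b₀ < z := fun z hz =>
    lt_of_le_of_ne (hb₀le z (hDB hz)) (Ne.symm hz.1)
  haveI : Nonempty ↥D := hDne.to_subtype
  haveI : Countable ↥D := hDcnt.to_subtype
  haveI : DenselyOrdered ↥D := by
    constructor
    rintro ⟨a, ha⟩ ⟨b, hb⟩ hab
    have : a < b := hab
    obtain ⟨z, hzD, hz1, hz2⟩ := hD2 a (hDB ha) (b - a) (by linarith)
    exact ⟨⟨z, hzD⟩, hz1, by show z < b; linarith⟩
  haveI : NoMaxOrder ↥D := by
    constructor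
    rintro ⟨a, ha⟩
    obtain ⟨z, hzD, hz1, _⟩ := hD2 a (hDB ha) 1 one_pos
    exact ⟨⟨z, hzD⟩, hz1⟩
  haveI : NoMinOrder ↥D := by
    constructor
    rintro ⟨a, ha⟩
    obtain ⟨z, hzD, hz1, hz2⟩ := hD2 b₀ hb₀B (a - b₀) (by linarith [hb₀ltD a ha])
    exact ⟨⟨z, hzD⟩, by show z < a; linarith⟩
  -- the rational side
  set Q₁ := ↥(Set.Ioo (0:ℚ) 1) with hQ₁_def
  haveI : Nonempty Q₁ := ⟨⟨1/2, by norm_num⟩⟩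
  obtain ⟨e⟩ := Order.iso_of_countable_dense Q₁ ↥D
  -- the parametrizing map
  set ev : Q₁ → ℝ := fun p => (e p : ℝ) with hev_def
  have hev_mono : ∀ {p p' : Q₁}, p < p' → ev p < ev p' := by
    intro p p' h
    have := e.strictMono h
    exact_mod_cast this
  have hev_D : ∀ p : Q₁, ev p ∈ D := fun p => (e p).2
  set g : ℝ → ℝ := fun x => sInf (ev '' {p : Q₁ | x < ((p : ℚ) : ℝ)}) with hg_def
  -- nonemptiness of index sets
  have hne_idx : ∀ x ∈ Ico (0:ℝ) 1, (ev '' {p : Q₁ | x < ((p : ℚ) : ℝ)}).Nonempty := by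
    rintro x ⟨hx0, hx1⟩
    obtain ⟨q, hq1, hq2⟩ := exists_rat_btwn hx1
    have hq0 : 0 < q := by
      have : (0:ℝ) ≤ x := hx0
      exact_mod_cast lt_of_le_of_lt this hq1
    have hqlt : q < 1 := by exact_mod_cast hq2
    exact ⟨ev ⟨q, hq0, hqlt⟩, ⟨q, hq0, hqlt⟩, hq1, rfl⟩
  have hbdd_idx : ∀ x : ℝ, BddBelow (ev '' {p : Q₁ | x < ((p : ℚ) : ℝ)}) := by
    intro x
    refine ⟨b₀, ?_⟩
    rintro y ⟨p, _, rfl⟩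
    exact hb₀le _ (hDB (hev_D p))
  have hgB : ∀ x ∈ Ico (0:ℝ) 1, g x ∈ B := by
    intro x hx
    exact hBS.sInf_mem (by rintro y ⟨p, _, rfl⟩; exact hDB (hev_D p)) (hne_idx x hx) (hbdd_idx x)
  have hg_mono : ∀ x y : ℝ, x ≤ y → y < 1 → (0:ℝ) ≤ x → g x ≤ g y := by
    intro x y hxy hy1 hx0
    apply csInf_le_csInf (hbdd_idx x) (hne_idx y ⟨le_trans hx0 hxy, hy1⟩)
    rintro v ⟨p, hp, rfl⟩
    exact ⟨p, lt_of_le_of_lt hxy hp, rfl⟩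
  have hg_strict : ∀ x ∈ Ico (0:ℝ) 1, ∀ y ∈ Ico (0:ℝ) 1, x < y → g x < g y := by
    rintro x ⟨hx0, hx1⟩ y ⟨hy0, hy1⟩ hxy
    obtain ⟨q, hq1, hq2⟩ := exists_rat_btwn hxy
    obtain ⟨q', hq'1, hq'2⟩ := exists_rat_btwn hq2
    have hq0 : 0 < q := by exact_mod_cast lt_of_le_of_lt hx0 hq1
    have hqlt : q < 1 := by
      have : (q:ℝ) < 1 := by linarith
      exact_mod_cast this
    have hq'0 : 0 < q' := by
      have : (q:ℚ) < q' := by exact_mod_cast hq'1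
      linarith
    have hq'lt : q' < 1 := by
      have : (q':ℝ) < 1 := by linarith
      exact_mod_cast this
    set p : Q₁ := ⟨q, hq0, hqlt⟩
    set p' : Q₁ := ⟨q', hq'0, hq'lt⟩
    have hpp' : p < p' := by
      show q < q'
      exact_mod_cast hq'1
    have h1 : g x ≤ ev p := csInf_le (hbdd_idx x) ⟨p, hq1, rfl⟩
    have h2 : ev p' ≤ g y := by
      apply le_csInf (hne_idx y ⟨hy0, hy1⟩)
      rintro v ⟨p'', hp'', rfl⟩
      have : p' < p'' := by
        show q' < _
        have : (q':ℝ) < ((p'' : ℚ) : ℝ) := lt_trans hq'2 hp''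
        exact_mod_cast this
      exact le_of_lt (hev_mono this)
    have := hev_mono hpp'
    linarith
  refine ⟨g, hgB, hg_strict, ?_, ?_⟩
  · -- right continuity
    rintro x ⟨hx0, hx1⟩ γ hγ
    have hlt : g x < g x + γ := by linarith
    obtain ⟨v, ⟨p, hp, rfl⟩, hv2⟩ := exists_lt_of_csInf_lt (hne_idx x ⟨hx0, hx1⟩) hlt
    have hp' : x < ((p : ℚ) : ℝ) := hp
    refine ⟨((p : ℚ) : ℝ) - x, by linarith, ?_⟩
    rintro y ⟨hy0, hy1⟩ hxy hylt
    constructor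
    · exact hg_mono x y hxy hy1 hx0
    · have hyp : y < ((p : ℚ) : ℝ) := by linarith
      have : g y ≤ ev p := csInf_le (hbdd_idx y) ⟨p, hyp, rfl⟩
      linarith
  · -- surjectivity
    intro b hb
    set U : Set Q₁ := {p : Q₁ | b < ev p} with hU_def
    have hUne : U.Nonempty := by
      obtain ⟨z, hzD, hz1, _⟩ := hD2 b hb 1 one_pos
      refine ⟨e.symm ⟨z, hzD⟩, ?_⟩
      show b < ev (e.symm ⟨z, hzD⟩)
      rw [hev_def]
      simp only [OrderIso.apply_symm_apply]
      exact hz1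
    have hUnomin : ∀ p ∈ U, ∃ p' ∈ U, p' < p := by
      intro p hp
      have hp' : b < ev p := hp
      obtain ⟨z, hzD, hz1, hz2⟩ := hD2 b hb (ev p - b) (by linarith)
      refine ⟨e.symm ⟨z, hzD⟩, ?_, ?_⟩
      · show b < ev (e.symm ⟨z, hzD⟩)
        rw [hev_def]
        simp only [OrderIso.apply_symm_apply]
        exact hz1
      · have : ev (e.symm ⟨z, hzD⟩) < ev p := by
          rw [hev_def]
          simp only [OrderIso.apply_symm_apply]
          linarith
        by_contra hc
        rw [not_lt] at hc
        rcases eq_or_lt_of_le hc with h | h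
        · rw [← h] at this; linarith
        · exact absurd (hev_mono h) (by linarith)
    set x : ℝ := sInf ((fun p : Q₁ => ((p : ℚ) : ℝ)) '' U) with hx_def
    have hbddU : BddBelow ((fun p : Q₁ => ((p : ℚ) : ℝ)) '' U) := by
      refine ⟨0, ?_⟩
      rintro v ⟨p, _, rfl⟩
      exact le_of_lt (show (0:ℝ) < ((p : ℚ) : ℝ) by exact_mod_cast p.2.1)
    have hUneim : ((fun p : Q₁ => ((p : ℚ) : ℝ)) '' U).Nonempty := hUne.image _
    have hx0 : 0 ≤ x := by
      apply le_csInf hUneim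
      rintro v ⟨p, _, rfl⟩
      exact le_of_lt (show (0:ℝ) < ((p : ℚ) : ℝ) by exact_mod_cast p.2.1)
    have hx1 : x < 1 := by
      obtain ⟨p, hp⟩ := hUne
      have h1 : x ≤ ((p : ℚ) : ℝ) := csInf_le hbddU ⟨p, hp, rfl⟩
      have h2 : ((p : ℚ) : ℝ) < 1 := by exact_mod_cast p.2.2
      linarith
    have hstrict : ∀ p ∈ U, x < ((p : ℚ) : ℝ) := by
      intro p hp
      obtain ⟨p', hp', hlt⟩ := hUnomin p hp
      have h1 : x ≤ ((p' : ℚ) : ℝ) := csInf_le hbddU ⟨p', hp', rfl⟩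
      have h2 : ((p' : ℚ) : ℝ) < ((p : ℚ) : ℝ) := by exact_mod_cast hlt
      linarith
    refine ⟨x, ⟨hx0, hx1⟩, ?_⟩
    apply le_antisymm
    · -- g x ≤ b
      apply le_of_forall_pos_le_add
      intro γ hγ
      obtain ⟨z, hzD, hz1, hz2⟩ := hD2 b hb γ hγ
      have hpU : e.symm ⟨z, hzD⟩ ∈ U := by
        show b < ev (e.symm ⟨z, hzD⟩)
        rw [hev_def]
        simp only [OrderIso.apply_symm_apply]
        exact hz1
      have hmem : ev (e.symm ⟨z, hzD⟩) ∈ ev '' {p : Q₁ | x < ((p : ℚ) : ℝ)} :=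
        ⟨e.symm ⟨z, hzD⟩, hstrict _ hpU, rfl⟩
      have : g x ≤ ev (e.symm ⟨z, hzD⟩) := csInf_le (hbdd_idx x) hmem
      have hevz : ev (e.symm ⟨z, hzD⟩) = z := by
        rw [hev_def]
        simp only [OrderIso.apply_symm_apply]
      rw [hevz] at this
      linarith
    · -- b ≤ g x
      apply le_csInf (hne_idx x ⟨hx0, hx1⟩)
      rintro v ⟨p'', hp'', rfl⟩
      obtain ⟨w, ⟨p, hpU, rfl⟩, hw⟩ := exists_lt_of_csInf_lt hUneim hp''
      have hplt : p < p'' := by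
        have : ((p : ℚ) : ℝ) < ((p'' : ℚ) : ℝ) := hw
        exact_mod_cast this
      exact le_of_lt (lt_trans hpU (hev_mono hplt))

noncomputable section

def eN : ℤ ≃ ℕ := Equiv.intEquivNat
def aSeq : ℕ → ℝ := fun k => 1 - (2:ℝ)⁻¹^k
def slSeq : ℕ → ℝ := fun k => (2:ℝ)⁻¹^(k+1)
/-- the folding map ℝ → [0,1) -/
def θ : ℝ → ℝ := fun x => aSeq (eN ⌊x⌋) + Int.fract x * slSeq (eN ⌊x⌋)

lemma sl_pos (k : ℕ) : 0 < slSeq k := by unfold slSeq; positivity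

lemma a_succ (k : ℕ) : aSeq (k+1) = aSeq k + slSeq k := by
  unfold aSeq slSeq
  rw [pow_succ]
  ring

lemma a_mono : StrictMono aSeq := by
  intro k k' h
  unfold aSeq
  have := pow_lt_pow_right_of_lt_one₀ (by norm_num : (0:ℝ) < 2⁻¹) (by norm_num) h
  linarith

lemma a_nonneg (k : ℕ) : 0 ≤ aSeq k := by
  unfold aSeq
  have : (2:ℝ)⁻¹^k ≤ 1 := pow_le_one₀ (by norm_num) (by norm_num)
  linarith

lemma a_lt_one (k : ℕ) : aSeq k < 1 := by
  unfold aSeq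
  have : (0:ℝ) < 2⁻¹^k := by positivity
  linarith

lemma theta_piece (x : ℝ) : θ x ∈ Ico (aSeq (eN ⌊x⌋)) (aSeq (eN ⌊x⌋ + 1)) := by
  unfold θ
  constructor
  · have h1 := Int.fract_nonneg x
    have h2 := sl_pos (eN ⌊x⌋)
    nlinarith
  · rw [a_succ]
    have h1 := Int.fract_lt_one x
    have h2 := sl_pos (eN ⌊x⌋)
    nlinarith

lemma theta_mem_Ico01 (x : ℝ) : θ x ∈ Ico (0:ℝ) 1 := by
  obtain ⟨h1, h2⟩ := theta_piece x
  exact ⟨le_trans (a_nonneg _) h1, lt_of_lt_of_le h2 (le_of_lt (a_lt_one _))⟩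

lemma piece_unique {y : ℝ} {k k' : ℕ} (h : y ∈ Ico (aSeq k) (aSeq (k+1)))
    (h' : y ∈ Ico (aSeq k') (aSeq (k'+1))) : k = k' := by
  rcases lt_trichotomy k k' with hlt | he | hgt
  · exfalso
    have : aSeq (k+1) ≤ aSeq k' := a_mono.monotone hlt
    linarith [h.2, h'.1]
  · exact he
  · exfalso
    have : aSeq (k'+1) ≤ aSeq k := a_mono.monotone hgt
    linarith [h.1, h'.2]

lemma exists_piece {y : ℝ} (hy : y ∈ Ico (0:ℝ) 1) : ∃ k, y ∈ Ico (aSeq k) (aSeq (k+1)) := by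
  classical
  have hex : ∃ k : ℕ, y < aSeq (k+1) := by
    obtain ⟨n, hn⟩ := exists_pow_lt_of_lt_one (show (0:ℝ) < 1 - y by linarith [hy.2])
      (show (2:ℝ)⁻¹ < 1 by norm_num)
    refine ⟨n, ?_⟩
    unfold aSeq
    have : (2:ℝ)⁻¹^(n+1) ≤ 2⁻¹^n := by
      apply pow_le_pow_of_le_one (by norm_num) (by norm_num)
      omega
    linarith
  set k := Nat.find hex with hk_def
  refine ⟨k, ?_, Nat.find_spec hex⟩
  rcases Nat.eq_zero_or_pos k with h0 | hpos
  · rw [h0]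
    unfold aSeq
    simpa using hy.1
  · obtain ⟨j, hj⟩ := Nat.exists_eq_succ_of_ne_zero (Nat.pos_iff_ne_zero.mp hpos)
    have := Nat.find_min hex (m := j) (by omega)
    push_neg at this
    rw [hj]
    exact this

lemma theta_eval (n : ℤ) (t : ℝ) (h0 : 0 ≤ t) (h1 : t < 1) :
    θ ((n:ℝ) + t) = aSeq (eN n) + t * slSeq (eN n) := by
  have hfl : ⌊(n:ℝ) + t⌋ = n := by
    rw [Int.floor_eq_iff]
    constructor
    · push_cast; linarith
    · push_cast; linarith
  have hfr : Int.fract ((n:ℝ) + t) = t := by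
    rw [Int.fract]
    rw [hfl]
    ring
  unfold θ
  rw [hfl, hfr]

lemma theta_surj_piece {y : ℝ} {k : ℕ} (hy : y ∈ Ico (aSeq k) (aSeq (k+1))) :
    ∃ x : ℝ, ⌊x⌋ = eN.symm k ∧ Int.fract x = (y - aSeq k)/slSeq k ∧ θ x = y := by
  set t : ℝ := (y - aSeq k)/slSeq k with ht_def
  have ht0 : 0 ≤ t := div_nonneg (by linarith [hy.1]) (le_of_lt (sl_pos k))
  have ht1 : t < 1 := by
    rw [div_lt_one (sl_pos k)]
    have := hy.2
    rw [a_succ] at this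
    linarith
  refine ⟨((eN.symm k : ℤ) : ℝ) + t, ?_, ?_, ?_⟩
  · rw [Int.floor_eq_iff]
    constructor
    · push_cast; linarith
    · push_cast; linarith
  · rw [Int.fract]
    rw [show ⌊((eN.symm k : ℤ) : ℝ) + t⌋ = eN.symm k by
      rw [Int.floor_eq_iff]; constructor
      · push_cast; linarith
      · push_cast; linarith]
    ring
  · rw [theta_eval _ _ ht0 ht1]
    rw [Equiv.apply_symm_apply]
    rw [ht_def, div_mul_cancel₀ _ (ne_of_gt (sl_pos k))]
    ring

lemma theta_inj : Injective θ := by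
  intro x x' h
  have hp := theta_piece x
  have hp' := theta_piece x'
  rw [h] at hp
  have hk : eN ⌊x⌋ = eN ⌊x'⌋ := piece_unique hp hp'
  have hn : ⌊x⌋ = ⌊x'⌋ := eN.injective hk
  unfold θ at h
  rw [hn] at h
  have hsl := sl_pos (eN ⌊x'⌋)
  have hfr : Int.fract x = Int.fract x' := by
    have := mul_right_cancel₀ (ne_of_gt hsl) (by linarith : Int.fract x * slSeq (eN ⌊x'⌋) = Int.fract x' * slSeq (eN ⌊x'⌋))
    exact this
  have h1 := Int.floor_add_fract x
  have h2 := Int.floor_add_fract x'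
  rw [hn, hfr] at h1
  linarith

lemma theta_T4 (x : ℝ) {γ : ℝ} (hγ : 0 < γ) :
    ∃ δ > 0, ∀ y, x ≤ y → y < x + δ → θ x ≤ θ y ∧ θ y < θ x + γ := by
  set n := ⌊x⌋ with hn_def
  set k := eN n with hk_def
  refine ⟨min (γ / slSeq k) ((n:ℝ) + 1 - x), lt_min (div_pos hγ (sl_pos k)) (by
    have := Int.lt_floor_add_one x
    rw [hn_def]; linarith), ?_⟩
  intro y hxy hylt
  have hfly : ⌊y⌋ = n := by
    rw [Int.floor_eq_iff]
    have h1 : (n:ℝ) ≤ x := Int.floor_le x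
    have h2 := min_le_right (γ / slSeq k) ((n:ℝ) + 1 - x)
    constructor
    · linarith
    · linarith
  have hθy : θ y = aSeq k + (y - (n:ℝ)) * slSeq k := by
    unfold θ
    rw [hfly, Int.fract, hfly]
  have hθx : θ x = aSeq k + (x - (n:ℝ)) * slSeq k := by
    unfold θ
    rw [Int.fract, ← hn_def, ← hk_def]
  have hsl := sl_pos k
  constructor
  · rw [hθy, hθx]
    nlinarith
  · rw [hθy, hθx]
    have h2 := min_le_left (γ / slSeq k) ((n:ℝ) + 1 - x)
    have h3 : y - x < γ / slSeq k := by linarith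
    have h4 : (y - x) * slSeq k < γ := (lt_div_iff₀ hsl).mp h3
    nlinarith

lemma theta_T5 (x : ℝ) {δ : ℝ} (hδ : 0 < δ) :
    ∃ γ > 0, ∀ y ∈ Ico (0:ℝ) 1, θ x ≤ y → y < θ x + γ →
      ∃ x', x ≤ x' ∧ x' < x + δ ∧ θ x' = y := by
  set n := ⌊x⌋ with hn_def
  set k := eN n with hk_def
  have hnx : (n:ℝ) ≤ x := Int.floor_le x
  have hxn1 : x < (n:ℝ) + 1 := Int.lt_floor_add_one x
  set δ' := min δ ((n:ℝ) + 1 - x) with hδ'_def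
  have hδ' : 0 < δ' := lt_min hδ (by linarith)
  have hsl := sl_pos k
  refine ⟨δ' * slSeq k, by positivity, ?_⟩
  intro y hy01 hy1 hy2
  have hθx : θ x = aSeq k + (x - (n:ℝ)) * slSeq k := by
    unfold θ
    rw [Int.fract, ← hn_def, ← hk_def]
  -- y is in piece k
  have hyk : y ∈ Ico (aSeq k) (aSeq (k+1)) := by
    constructor
    · have h1 := Int.fract_nonneg x
      have : aSeq k ≤ θ x := by
        rw [hθx]
        nlinarith
      linarith
    · rw [a_succ]
      have hle : δ' ≤ (n:ℝ) + 1 - x := min_le_right _ _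
      have : θ x + δ' * slSeq k ≤ aSeq k + slSeq k := by
        rw [hθx]
        nlinarith
      linarith
  obtain ⟨x', hfl', hfr', hθ'⟩ := theta_surj_piece hyk
  refine ⟨x', ?_, ?_, hθ'⟩
  · -- x ≤ x'
    have h1 : Int.fract x ≤ Int.fract x' := by
      rw [hfr']
      rw [le_div_iff₀ hsl]
      have : Int.fract x = x - (n:ℝ) := by rw [Int.fract, ← hn_def]
      rw [this]
      nlinarith [hy1, hθx]
    have hfx := Int.floor_add_fract x
    have hfx' := Int.floor_add_fract x'
    have : (⌊x'⌋ : ℝ) = (n : ℝ) := by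
      rw [hfl']
      rw [hk_def]
      simp
    linarith
  · -- x' < x + δ
    have h1 : Int.fract x' < Int.fract x + δ' := by
      rw [hfr']
      rw [div_lt_iff₀ hsl]
      have : Int.fract x = x - (n:ℝ) := by rw [Int.fract, ← hn_def]
      rw [this]
      nlinarith [hy2, hθx]
    have hfx := Int.floor_add_fract x
    have hfx' := Int.floor_add_fract x'
    have hfloor : (⌊x'⌋ : ℝ) = (n : ℝ) := by
      rw [hfl']
      rw [hk_def]
      simp
    have hle : δ' ≤ δ := min_le_left _ _
    linarith

lemma theta_surj01 {y : ℝ} (hy : y ∈ Ico (0:ℝ) 1) : ∃ x, θ x = y := by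
  obtain ⟨k, hk⟩ := exists_piece hy
  obtain ⟨x, _, _, hx⟩ := theta_surj_piece hk
  exact ⟨x, hx⟩

end

-- ## final assembly

lemma mem_nhds_S {V : Set 𝕊} {x : ℝ} : V ∈ 𝓝 (toS x) ↔ ∃ δ > 0, SIco x (x + δ) ⊆ V := by
  constructor
  · intro h
    obtain ⟨U, hUV, hU, hxU⟩ := mem_nhds_iff.mp h
    obtain ⟨δ, hδ, hsub⟩ := isOpen_iff.mp hU x hxU
    exact ⟨δ, hδ, subset_trans hsub hUV⟩
  · rintro ⟨δ, hδ, hsub⟩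
    exact mem_nhds_iff.mpr ⟨SIco x (x + δ), hsub, isOpen_SIco (by linarith),
      mem_SIco.mpr ⟨le_refl _, by linarith⟩⟩

theorem main {X : Type} [TopologicalSpace X] [T1Space X] [RegularSpace X] (f : 𝕊 → X)
    (hf : Continuous f) (hopen : IsOpenMap f) (hsurj : Surjective f)
    (hw : ¬ SecondCountableTopology X) :
    ∃ C : Set X, IsClosed C ∧ Nonempty (C ≃ₜ 𝕊) := by
  classical
  obtain ⟨d, ε, B, hε, hBsub, hBS, hBne, hBcrowd, hBwin, hBclosed⟩ :=
    exists_Bfin hf hopen hsurj hw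
  have hBbdd : BddBelow B := ⟨d, fun b hb => (hBsub hb).1⟩
  obtain ⟨g, hg0, hg2, hg3, hg4⟩ := core_param hBS hBne hBbdd hBcrowd
  set Ψ : ℝ → ℝ := fun x => g (θ x) with hΨ_def
  have hΨB : ∀ x, Ψ x ∈ B := fun x => hg0 _ (theta_mem_Ico01 x)
  have hΨinj : Injective Ψ := by
    intro a b hab
    by_contra hne
    have hθne : θ a ≠ θ b := fun h => hne (theta_inj h)
    rcases lt_or_gt_of_ne hθne with h | h
    · exact absurd hab (ne_of_lt (hg2 _ (theta_mem_Ico01 a) _ (theta_mem_Ico01 b) h))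
    · exact absurd hab.symm (ne_of_lt (hg2 _ (theta_mem_Ico01 b) _ (theta_mem_Ico01 a) h))
  have hΨsurj : ∀ b ∈ B, ∃ x, Ψ x = b := by
    intro b hb
    obtain ⟨y, hy, hgy⟩ := hg4 b hb
    obtain ⟨x, hx⟩ := theta_surj01 hy
    exact ⟨x, by rw [hΨ_def]; simp only []; rw [hx, hgy]⟩
  have hP4 : ∀ x : ℝ, ∀ γ > 0, ∃ δ > 0, ∀ x', x ≤ x' → x' < x + δ →
      Ψ x ≤ Ψ x' ∧ Ψ x' < Ψ x + γ := by
    intro x γ hγ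
    obtain ⟨δg, hδg, hgprop⟩ := hg3 _ (theta_mem_Ico01 x) γ hγ
    obtain ⟨δ, hδ, hT4⟩ := theta_T4 x hδg
    refine ⟨δ, hδ, ?_⟩
    intro x' h1 h2
    obtain ⟨hθ1, hθ2⟩ := hT4 x' h1 h2
    exact hgprop _ (theta_mem_Ico01 x') hθ1 hθ2
  have hP5 : ∀ x : ℝ, ∀ δ > 0, ∃ γ > 0, ∀ b ∈ B, Ψ x ≤ b → b < Ψ x + γ →
      ∃ x', x ≤ x' ∧ x' < x + δ ∧ Ψ x' = b := by
    intro x δ hδ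
    obtain ⟨γT, hγT, hT5⟩ := theta_T5 x hδ
    -- an intermediate point z'' above θ x
    set z : ℝ := (θ x + min (θ x + γT) 1)/2 with hz_def
    have hθx01 := theta_mem_Ico01 x
    have hzgt : θ x < z := by
      rw [hz_def]
      have h1 : θ x < min (θ x + γT) 1 := lt_min (by linarith) hθx01.2
      linarith
    have hz01 : z ∈ Ico (0:ℝ) 1 := by
      constructor
      · linarith [hθx01.1]
      · rw [hz_def]
        have h2 : min (θ x + γT) 1 ≤ 1 := min_le_right _ _
        have h3 : θ x < 1 := hθx01.2
        linarith
    have hzlt : z < θ x + γT := by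
      rw [hz_def]
      have h2 : min (θ x + γT) 1 ≤ θ x + γT := min_le_left _ _
      linarith
    refine ⟨g z - g (θ x), by linarith [hg2 _ hθx01 _ hz01 hzgt], ?_⟩
    intro b hb h1 h2
    obtain ⟨y, hy01, hgy⟩ := hg4 b hb
    have hyge : θ x ≤ y := by
      by_contra hc
      push_neg at hc
      have := hg2 _ hy01 _ hθx01 hc
      rw [hgy] at this
      exact absurd h1 (not_le.mpr this)
    have hzb : b < g z := by
      have hΨx : Ψ x = g (θ x) := rfl
      rw [hΨx] at h2
      linarith
    have hylt : y < z := by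
      by_contra hc
      push_neg at hc
      have hgzy : g z ≤ b := by
        rcases eq_or_lt_of_le hc with h | h
        · rw [h, hgy]
        · rw [← hgy]
          exact le_of_lt (hg2 _ hz01 _ hy01 h)
      linarith
    obtain ⟨x', hx'1, hx'2, hx'3⟩ := hT5 y hy01 hyge (by linarith)
    exact ⟨x', hx'1, hx'2, by rw [hΨ_def]; simp only []; rw [hx'3, hgy]⟩
  -- the closed set C
  set C : Set X := (fun t => f (toS t)) '' B with hC_def
  -- the equivalence
  have hΦmem : ∀ sx : 𝕊, f (toS (Ψ (toR sx))) ∈ C := fun sx => ⟨Ψ (toR sx), hΨB _, rfl⟩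
  set Φ : 𝕊 → ↥C := fun sx => ⟨f (toS (Ψ (toR sx))), hΦmem sx⟩ with hΦ_def
  have hwin' : ∀ a b : ℝ, a ∈ B → b ∈ B → f (toS a) = f (toS b) → a = b := by
    intro a b ha hb hab
    apply hBwin b hb a hab
    have := hBsub ha
    exact ⟨this.1, by linarith [this.2]⟩
  have hΦbij : Function.Bijective Φ := by
    constructor
    · intro a b hab
      have h1 : f (toS (Ψ (toR a))) = f (toS (Ψ (toR b))) := congrArg Subtype.val hab
      have h2 := hwin' _ _ (hΨB (toR a)) (hΨB (toR b)) h1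
      have h3 := hΨinj h2
      exact congrArg toS h3
    · rintro ⟨y, b, hbB, rfl⟩
      obtain ⟨x, hx⟩ := hΨsurj b hbB
      exact ⟨toS x, Subtype.ext (by simp only [hΦ_def]; rw [show toR (toS x) = x from rfl, hx])⟩
  have hΦcont : Continuous Φ := by
    apply Continuous.subtype_mk
    rw [continuous_iff_continuousAt]
    intro sx
    rw [ContinuousAt]
    intro U hU
    obtain ⟨O, hOU, hOopen, hmemO⟩ := mem_nhds_iff.mp hU
    obtain ⟨γ, hγ, hsub⟩ := exists_subset_img hf hOopen hmemO
    obtain ⟨δ, hδ, hprop⟩ := hP4 (toR sx) γ hγ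
    rw [Filter.mem_map]
    rw [show sx = toS (toR sx) from rfl, mem_nhds_S]
    refine ⟨δ, hδ, ?_⟩
    rintro z ⟨w, hw, rfl⟩
    obtain ⟨h1, h2⟩ := hprop w hw.1 hw.2
    simp only [Set.mem_preimage]
    apply hOU
    apply hsub
    exact ⟨toS (Ψ w), mem_SIco.mpr ⟨h1, h2⟩, rfl⟩
  have hΦopen : IsOpenMap Φ := by
    intro V hV
    -- choose data for each point of V
    have hchoice : ∀ t : ℝ, ∃ (δt γt : ℝ), toS t ∈ V →
        (0 < δt ∧ 0 < γt ∧ γt ≤ ε ∧ SIco t (t + δt) ⊆ V ∧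
         ∀ b ∈ B, Ψ t ≤ b → b < Ψ t + γt → ∃ x', t ≤ x' ∧ x' < t + δt ∧ Ψ x' = b) := by
      intro t
      by_cases ht : toS t ∈ V
      · obtain ⟨δt, hδt, hsubV⟩ := isOpen_iff.mp hV t ht
        obtain ⟨γt, hγt, hprop⟩ := hP5 t δt hδt
        refine ⟨δt, min γt ε, fun _ => ⟨hδt, lt_min hγt hε, min_le_right _ _, hsubV, ?_⟩⟩
        intro b hb h1 h2
        exact hprop b hb h1 (lt_of_lt_of_le h2 (by linarith [min_le_left γt ε]))
      · exact ⟨1, 1, fun hc => absurd hc ht⟩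
    choose δt γt hδγ using hchoice
    set O : Set X := ⋃ t : {t : ℝ // toS t ∈ V}, f '' SIco (Ψ t.1) (Ψ t.1 + γt t.1) with hO_def
    have hOopen : IsOpen O := by
      apply isOpen_iUnion
      rintro ⟨t, ht⟩
      exact hopen _ (isOpen_SIco (by linarith [(hδγ t ht).2.1]))
    rw [isOpen_induced_iff]
    refine ⟨O, hOopen, ?_⟩
    apply Set.eq_of_subset_of_subset
    · rintro ⟨y, hyC⟩ hyO
      simp only [Set.mem_preimage] at hyO
      obtain ⟨W, ⟨⟨t, ht⟩, rfl⟩, hyW⟩ := hyO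
      obtain ⟨z, hz, rfl⟩ := hyW
      obtain ⟨w, hw, rfl⟩ := hz
      obtain ⟨hδt, hγt, hγε, hsubV, hprop⟩ := hδγ t ht
      -- identify w with an element of B
      obtain ⟨b, hbB, hfb⟩ := hyC
      have hΨtB := hΨB t
      have hΨsub := hBsub hΨtB
      have hwwin : w ∈ Ico d (d + 2*ε) :=
        ⟨le_trans hΨsub.1 hw.1, by linarith [hw.2, hΨsub.2]⟩
      have hwb : w = b := hBwin b hbB w hfb.symm hwwin
      subst hwb
      obtain ⟨x', hx'1, hx'2, hx'3⟩ := hprop w hbB hw.1 hw.2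
      refine ⟨toS x', hsubV ⟨x', ⟨hx'1, hx'2⟩, rfl⟩, ?_⟩
      apply Subtype.ext
      simp only [hΦ_def]
      rw [show toR (toS x') = x' from rfl, hx'3]
    · rintro c ⟨v, hvV, rfl⟩
      simp only [Set.mem_preimage, hΦ_def]
      have hvt : toS (toR v) ∈ V := hvV
      obtain ⟨hδt, hγt, _, _, _⟩ := hδγ (toR v) hvt
      exact Set.mem_iUnion.mpr ⟨⟨toR v, hvt⟩, mem_img_self f hγt⟩
  -- conclude
  have hhomeo : 𝕊 ≃ₜ ↥C :=
    (Equiv.ofBijective Φ hΦbij).toHomeomorphOfContinuousOpen hΦcont hΦopen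
  exact ⟨C, hBclosed, ⟨hhomeo.symm⟩⟩

end SorgAux

/-- If a T1 regular space `X` with uncountable weight (i.e. not second countable) is a
continuous open image of the Sorgenfrey line, then `X` has a closed subset homeomorphic to the
Sorgenfrey line. -/
theorem stmt4 {X : Type} [TopologicalSpace X] [T1Space X] [RegularSpace X] (f : 𝕊 → X)
    (hf : Continuous f) (hopen : IsOpenMap f) (hsurj : Surjective f)
    (hw : ¬ SecondCountableTopology X) :
    ∃ C : Set X, IsClosed C ∧ Nonempty (C ≃ₜ 𝕊) := by
  exact SorgAux.main f hf hopen hsurj hw
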